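/- Let a and b be distinct positive real numbers, let k > 0 be a real number, and let β ≥ 2/3 be a real number. Then A_β(a^k, b^k) < (3/2^(1/β)) · He(a^k, b^k), where He is the Heronian mean and A_β is the power mean of order β. -/

import Mathlib

open Real

private lemma rpow_add_rpow_le_real {p q : ℝ} (a b : ℝ) (ha : 0 ≤ a) (hb : 0 ≤ b)
    (hp_pos : 0 < p) (hpq : p ≤ q) :
    (a ^ q + b ^ q) ^ (1 / q) ≤ (a ^ p + b ^ p) ^ (1 / p) := by
  lift a to NNReal using ha
  lift b to NNReal using hb
  exact_mod_cast NNReal.rpow_add_rpow_le a b hp_pos hpq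

private lemma key_ineq (x y : ℝ) (hx : 0 < x) (hy : 0 < y) :
    (x ^ (2/3 : ℝ) + y ^ (2/3 : ℝ)) ^ (3/2 : ℝ) < x + y + Real.sqrt (x * y) := by
  set s : ℝ := x ^ ((1:ℝ)/6) with hs_def
  set t : ℝ := y ^ ((1:ℝ)/6) with ht_def
  have hs : 0 < s := Real.rpow_pos_of_pos hx _
  have ht : 0 < t := Real.rpow_pos_of_pos hy _
  have hx6 : s ^ 6 = x := by
    rw [hs_def, ← Real.rpow_natCast (x ^ ((1:ℝ)/6)) 6, ← Real.rpow_mul hx.le]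
    norm_num
  have hy6 : t ^ 6 = y := by
    rw [ht_def, ← Real.rpow_natCast (y ^ ((1:ℝ)/6)) 6, ← Real.rpow_mul hy.le]
    norm_num
  have hx23 : x ^ (2/3 : ℝ) = s ^ 4 := by
    rw [hs_def, ← Real.rpow_natCast (x ^ ((1:ℝ)/6)) 4, ← Real.rpow_mul hx.le]
    norm_num
  have hy23 : y ^ (2/3 : ℝ) = t ^ 4 := by
    rw [ht_def, ← Real.rpow_natCast (y ^ ((1:ℝ)/6)) 4, ← Real.rpow_mul hy.le]
    norm_num
  have hsqrt : Real.sqrt (x * y) = s ^ 3 * t ^ 3 := by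
    rw [Real.sqrt_eq_rpow, Real.mul_rpow hx.le hy.le, hs_def, ht_def,
      ← Real.rpow_natCast (x ^ ((1:ℝ)/6)) 3, ← Real.rpow_natCast (y ^ ((1:ℝ)/6)) 3,
      ← Real.rpow_mul hx.le, ← Real.rpow_mul hy.le]
    norm_num
  rw [hx23, hy23, hsqrt, ← hx6, ← hy6]
  have hbase : (0:ℝ) ≤ s ^ 4 + t ^ 4 := by positivity
  have hRHS : (0:ℝ) ≤ s ^ 6 + t ^ 6 + s ^ 3 * t ^ 3 := by positivity
  refine lt_of_pow_lt_pow_left₀ 2 hRHS ?_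
  have hsq : ((s ^ 4 + t ^ 4) ^ (3/2 : ℝ)) ^ 2 = (s ^ 4 + t ^ 4) ^ 3 := by
    rw [← Real.rpow_natCast ((s ^ 4 + t ^ 4) ^ (3/2 : ℝ)) 2, ← Real.rpow_mul hbase,
      ← Real.rpow_natCast (s ^ 4 + t ^ 4) 3]
    norm_num
  rw [hsq]
  have hQ : 0 < 2*s^6 + 2*t^6 + 3*s^3*t^3 - 3*s^5*t - 3*s*t^5 := by
    nlinarith [mul_nonneg (sq_nonneg (s - t)) (show (0:ℝ) ≤ 2*s^4 + s^3*t + s*t^3 + 2*t^4 by positivity), mul_pos (pow_pos hs 3) (pow_pos ht 3)]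
  nlinarith [mul_pos (mul_pos (pow_pos hs 3) (pow_pos ht 3)) hQ]

theorem power_mean_lt_heronian (a b : ℝ) (ha : 0 < a) (hb : 0 < b) (hab : a ≠ b)
    (k : ℝ) (hk : 0 < k) (β : ℝ) (hβ : 2 / 3 ≤ β) :
    (((a ^ k) ^ β + (b ^ k) ^ β) / 2) ^ (1 / β) <
      (3 / 2 ^ (1 / β)) * ((a ^ k + b ^ k + Real.sqrt (a ^ k * b ^ k)) / 3) := by
  set x : ℝ := a ^ k with hx_def
  set y : ℝ := b ^ k with hy_def
  have hx : 0 < x := Real.rpow_pos_of_pos ha _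
  have hy : 0 < y := Real.rpow_pos_of_pos hb _
  have hβ0 : 0 < β := lt_of_lt_of_le (by norm_num) hβ
  have h2 : (0:ℝ) < (2:ℝ) ^ (1/β : ℝ) := Real.rpow_pos_of_pos (by norm_num) _
  have hkey : (x ^ β + y ^ β) ^ (1/β) < x + y + Real.sqrt (x * y) := by
    calc (x ^ β + y ^ β) ^ (1/β)
        ≤ (x ^ (2/3 : ℝ) + y ^ (2/3 : ℝ)) ^ (1/(2/3 : ℝ)) :=
          rpow_add_rpow_le_real x y hx.le hy.le (by norm_num) hβ
      _ = (x ^ (2/3 : ℝ) + y ^ (2/3 : ℝ)) ^ (3/2 : ℝ) := by norm_num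
      _ < x + y + Real.sqrt (x * y) := key_ineq x y hx hy
  have hLHS : ((x ^ β + y ^ β) / 2) ^ (1/β) = (x ^ β + y ^ β) ^ (1/β) / 2 ^ (1/β) := by
    rw [Real.div_rpow (by positivity) (by norm_num)]
  have hRHS : (3 / (2:ℝ) ^ (1/β)) * ((x + y + Real.sqrt (x * y)) / 3)
      = (x + y + Real.sqrt (x * y)) / 2 ^ (1/β) := by
    field_simp
  rw [hLHS, hRHS]
  exact div_lt_div_of_pos_right hkey h2
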